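/- Every càdlàg function f : [a,b] → ℝ has a smallest maximizer: there exists a unique x* ∈ [a,b] such that max(f(x*), f(x*−)) = sup_{[a,b]} f and x* ≤ ξ for every other point ξ with max(f(ξ), f(ξ−)) = sup_{[a,b]} f. -/

import Mathlib

open Filter Set Topology

/-- `f` is càdlàg on `[a,b]` with left-limit function `L`: `f` is right-continuous at
every point of `[a,b)`, the left limit of `f` at every `t ∈ (a,b]` exists and equals
`L t`, and by convention `L a = f a`. -/
def CadlagOnWith (a b : ℝ) (f L : ℝ → ℝ) : Prop :=
  (∀ t ∈ Set.Ico a b, Filter.Tendsto f (nhdsWithin t (Set.Ico t b)) (nhds (f t))) ∧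
  (∀ t ∈ Set.Ioc a b, Filter.Tendsto f (nhdsWithin t (Set.Ico a t)) (nhds (L t))) ∧
  L a = f a

/-- `x` is a maximizer of `f` on `[a,b]`: `max (f x) (f (x-))` equals `sup_{[a,b]} f`. -/
def IsMaxPt (a b : ℝ) (f L : ℝ → ℝ) (x : ℝ) : Prop :=
  x ∈ Set.Icc a b ∧ max (f x) (L x) = sSup (f '' Set.Icc a b)

/-- Every càdlàg function on `[a,b]` has a unique smallest maximizer. -/
theorem exists_unique_smallest_maximizer (a b : ℝ) (hab : a ≤ b) (f L : ℝ → ℝ)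
    (hf : CadlagOnWith a b f L) :
    ∃! x : ℝ, IsMaxPt a b f L x ∧ ∀ ξ : ℝ, IsMaxPt a b f L ξ → x ≤ ξ := by
  obtain ⟨hr, hl, hLa⟩ := hf
  set M := sSup (f '' Icc a b) with hM
  -- trivial case a = b
  rcases eq_or_lt_of_le hab with rfl | hab'
  · have hMa : M = f a := by
      rw [hM, Icc_self, image_singleton, csSup_singleton]
    refine ⟨a, ⟨⟨⟨le_refl a, le_refl a⟩, by rw [hLa, max_self]; exact hMa.symm⟩,
      fun ξ hξ => hξ.1.1⟩, ?_⟩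
    rintro y ⟨⟨⟨h1, h2⟩, _⟩, _⟩
    exact le_antisymm h2 h1
  -- now a < b
  -- nontriviality of the left filter
  have hNB : ∀ x : ℝ, a < x → (𝓝[Ico a x] x).NeBot := by
    intro x hx
    rw [← mem_closure_iff_nhdsWithin_neBot, closure_Ico (ne_of_lt hx)]
    exact ⟨le_of_lt hx, le_refl x⟩
  -- boundedness
  have hbdd : BddAbove (f '' Icc a b) := by
    have key : ∀ x ∈ Icc a b, ∃ t ∈ 𝓝[Icc a b] x, BddAbove (f '' t) := by
      intro x hx
      set C := max (max (f x + 1) (L x + 1)) (f b) with hC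
      have h1 : ∀ᶠ y in 𝓝[Ico x b] x, f y ≤ C := by
        rcases lt_or_eq_of_le hx.2 with hxb | rfl
        · filter_upwards [(hr x ⟨hx.1, hxb⟩).eventually_lt_const
            (lt_add_one (f x))] with y hy
          exact le_trans (le_of_lt hy) (le_max_of_le_left (le_max_left _ _))
        · rw [Ico_self, nhdsWithin_empty]
          exact Filter.eventually_bot
      have h2 : ∀ᶠ y in 𝓝[Ico a x] x, f y ≤ C := by
        rcases lt_or_eq_of_le hx.1 with hax | rfl
        · filter_upwards [(hl x ⟨hax, hx.2⟩).eventually_lt_const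
            (lt_add_one (L x))] with y hy
          exact le_trans (le_of_lt hy) (le_max_of_le_left (le_max_right _ _))
        · rw [Ico_self, nhdsWithin_empty]
          exact Filter.eventually_bot
      have h3 : ∀ᶠ y in 𝓝[{b}] x, f y ≤ C := by
        filter_upwards [self_mem_nhdsWithin] with y hy
        rw [mem_singleton_iff] at hy
        rw [hy]
        exact le_max_right _ _
      have hsub : Icc a b ⊆ (Ico a x ∪ Ico x b) ∪ {b} := by
        intro y hy
        rcases lt_or_ge y x with h | h
        · exact Or.inl (Or.inl ⟨hy.1, h⟩)
        · rcases lt_or_eq_of_le hy.2 with h' | h'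
          · exact Or.inl (Or.inr ⟨h, h'⟩)
          · exact Or.inr h'
      have hev : ∀ᶠ y in 𝓝[Icc a b] x, f y ≤ C := by
        refine Eventually.filter_mono (nhdsWithin_mono x hsub) ?_
        rw [nhdsWithin_union, nhdsWithin_union, eventually_sup, eventually_sup]
        exact ⟨⟨h2, h1⟩, h3⟩
      refine ⟨{y | f y ≤ C}, hev, ⟨C, ?_⟩⟩
      rintro _ ⟨y, hy, rfl⟩
      exact hy
    exact isCompact_Icc.induction_on (by simp : BddAbove (f '' (∅ : Set ℝ)))
      (fun s t hst ht => ht.mono (Set.image_mono (f := f) hst))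
      (fun s t hs ht => by rw [image_union]; exact hs.union ht) key
  have hfle : ∀ x ∈ Icc a b, f x ≤ M := fun x hx => le_csSup hbdd ⟨x, hx, rfl⟩
  have hLle : ∀ x ∈ Ioc a b, L x ≤ M := by
    intro x hx
    haveI := hNB x hx.1
    refine le_of_tendsto (hl x hx) ?_
    filter_upwards [self_mem_nhdsWithin] with y hy
    exact hfle y ⟨hy.1, le_trans (le_of_lt hy.2) hx.2⟩
  have hmaxle : ∀ x ∈ Icc a b, max (f x) (L x) ≤ M := by
    intro x hx
    rcases eq_or_lt_of_le hx.1 with rfl | h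
    · rw [hLa, max_self]; exact hfle a hx
    · exact max_le (hfle x hx) (hLle x ⟨h, hx.2⟩)
  have hne : (f '' Icc a b).Nonempty := ⟨f a, a, ⟨le_refl a, hab⟩, rfl⟩
  -- squeeze lemma
  have hsq : ∀ w : ℕ → ℝ, (∀ n : ℕ, M - 1 / (n + 1) < f (w n)) → (∀ n, w n ∈ Icc a b) →
      Tendsto (fun n => f (w n)) atTop (𝓝 M) := by
    intro w h1 h2
    have hlow : Tendsto (fun n : ℕ => M - 1 / (n + 1)) atTop (𝓝 M) := by
      have := tendsto_const_nhds (α := ℕ) (x := M) |>.sub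
        tendsto_one_div_add_atTop_nhds_zero_nat
      rwa [sub_zero] at this
    exact tendsto_of_tendsto_of_tendsto_of_le_of_le hlow tendsto_const_nhds
      (fun n => le_of_lt (h1 n)) (fun n => hfle _ (h2 n))
  -- existence of a maximizer
  have hex : ∃ z, IsMaxPt a b f L z := by
    have hu : ∀ n : ℕ, ∃ x, x ∈ Icc a b ∧ M - 1 / (n + 1) < f x := by
      intro n
      have hpos : (0 : ℝ) < 1 / (n + 1) := by positivity
      obtain ⟨y, ⟨x, hx, rfl⟩, hy⟩ := exists_lt_of_lt_csSup hne (sub_lt_self M hpos)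
      exact ⟨x, hx, hy⟩
    choose u hu1 hu2 using hu
    obtain ⟨x, hx, φ, hφ, hφt⟩ := isCompact_Icc.tendsto_subseq hu1
    have hsplit : (∃ᶠ n in atTop, x ≤ u (φ n)) ∨ (∃ᶠ n in atTop, u (φ n) < x) := by
      rw [← frequently_or_distrib]
      exact Frequently.of_forall (fun n => le_or_gt x (u (φ n)))
    -- a common construction: from a monotone-indexed subsequence get limits
    rcases hsplit with hfreq | hfreq
    · obtain ⟨ψ, hψ, hψP⟩ := extraction_of_frequently_atTop hfreq
      set v : ℕ → ℝ := fun n => u (φ (ψ n)) with hv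
      have hvmem : ∀ n, v n ∈ Icc a b := fun n => hu1 _
      have hvt : Tendsto v atTop (𝓝 x) := hφt.comp hψ.tendsto_atTop
      have hvlt : ∀ n : ℕ, M - 1 / (n + 1) < f (v n) := by
        intro n
        refine lt_of_le_of_lt ?_ (hu2 (φ (ψ n)))
        have hn : (n : ℝ) + 1 ≤ (φ (ψ n) : ℝ) + 1 := by
          have h' : n ≤ φ (ψ n) := (hφ.comp hψ).le_apply
          have : (n : ℝ) ≤ (φ (ψ n) : ℝ) := Nat.cast_le.mpr h'
          linarith
        have h0 : (0 : ℝ) < (n : ℝ) + 1 := by positivity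
        have := one_div_le_one_div_of_le h0 hn
        linarith
      have hfvM : Tendsto (fun n => f (v n)) atTop (𝓝 M) := hsq v hvlt hvmem
      rcases lt_or_eq_of_le hx.2 with hxb | hxb
      · -- x < b : right continuity gives f x = M
        have hevb : ∀ᶠ n in atTop, v n < b := hvt.eventually_lt_const hxb
        have hvt' : Tendsto v atTop (𝓝[Ico x b] x) := by
          rw [tendsto_nhdsWithin_iff]
          refine ⟨hvt, ?_⟩
          filter_upwards [hevb] with n hn
          exact ⟨hψP n, hn⟩
        have := (hr x ⟨hx.1, hxb⟩).comp hvt'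
        have hfx : f x = M := tendsto_nhds_unique this hfvM
        exact ⟨x, hx, le_antisymm (hmaxle x hx) (hfx ▸ le_max_left _ _)⟩
      · -- x = b : the subsequence is eventually b itself
        have hvb : ∀ n, v n = b := fun n => le_antisymm ((hvmem n).2) (hxb ▸ hψP n)
        have hfb : f b = M := by
          refine tendsto_nhds_unique ?_ hfvM
          simp only [hvb]
          exact tendsto_const_nhds
        exact ⟨b, ⟨hab, le_refl b⟩,
          le_antisymm (hmaxle b ⟨hab, le_refl b⟩) (hfb ▸ le_max_left _ _)⟩
    · obtain ⟨ψ, hψ, hψP⟩ := extraction_of_frequently_atTop hfreq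
      set v : ℕ → ℝ := fun n => u (φ (ψ n)) with hv
      have hvmem : ∀ n, v n ∈ Icc a b := fun n => hu1 _
      have hvt : Tendsto v atTop (𝓝 x) := hφt.comp hψ.tendsto_atTop
      have hvlt : ∀ n : ℕ, M - 1 / (n + 1) < f (v n) := by
        intro n
        refine lt_of_le_of_lt ?_ (hu2 (φ (ψ n)))
        have hn : (n : ℝ) + 1 ≤ (φ (ψ n) : ℝ) + 1 := by
          have h' : n ≤ φ (ψ n) := (hφ.comp hψ).le_apply
          have : (n : ℝ) ≤ (φ (ψ n) : ℝ) := Nat.cast_le.mpr h'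
          linarith
        have h0 : (0 : ℝ) < (n : ℝ) + 1 := by positivity
        have := one_div_le_one_div_of_le h0 hn
        linarith
      have hfvM : Tendsto (fun n => f (v n)) atTop (𝓝 M) := hsq v hvlt hvmem
      have hax : a < x := lt_of_le_of_lt (hvmem 0).1 (hψP 0)
      have hvt' : Tendsto v atTop (𝓝[Ico a x] x) := by
        rw [tendsto_nhdsWithin_iff]
        exact ⟨hvt, Eventually.of_forall (fun n => ⟨(hvmem n).1, hψP n⟩)⟩
      have := (hl x ⟨hax, hx.2⟩).comp hvt'
      have hLx : L x = M := tendsto_nhds_unique this hfvM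
      exact ⟨x, hx, le_antisymm (hmaxle x hx) (hLx ▸ le_max_right _ _)⟩
  -- the smallest maximizer
  obtain ⟨z, hz⟩ := hex
  set S : Set ℝ := {x | IsMaxPt a b f L x} with hS
  have hSne : S.Nonempty := ⟨z, hz⟩
  have hSbd : BddBelow S := ⟨a, fun s hs => hs.1.1⟩
  set c := sInf S with hc
  have hca : a ≤ c := le_csInf hSne (fun s hs => hs.1.1)
  have hcb : c ≤ b := le_trans (csInf_le hSbd hz) hz.1.2
  have hcS : c ∈ S := by
    by_cases h : c ∈ S
    · exact h
    · have hlt : ∀ s ∈ S, c < s :=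
        fun s hs => lt_of_le_of_ne (csInf_le hSbd hs) (fun e => h (e ▸ hs))
    -- c is a limit from the right of maximizers; extract good points
      have hcb' : c < b := lt_of_lt_of_le (hlt z hz) hz.1.2
      have hy : ∀ n : ℕ, ∃ y, c < y ∧ y ≤ c + 1 / (n + 1) ∧ y ≤ b ∧
          M - 1 / (n + 1) < f y := by
        intro n
        have hpos : (0 : ℝ) < 1 / (n + 1) := by positivity
        obtain ⟨s, hsS, hs⟩ := exists_lt_of_csInf_lt hSne
          (lt_add_of_pos_right c hpos)
        have hcs : c < s := hlt s hsS
        have hsb : s ≤ b := hsS.1.2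
        have hmx : f s = M ∨ L s = M := by
          have h2 := hsS.2
          rcases max_choice (f s) (L s) with e | e
          · exact Or.inl (by rw [← e]; exact h2)
          · exact Or.inr (by rw [← e]; exact h2)
        rcases hmx with e | e
        · exact ⟨s, hcs, le_of_lt hs, hsb, by rw [e]; exact sub_lt_self M hpos⟩
        · have has : a < s := lt_of_le_of_lt hca hcs
          haveI := hNB s has
          have hts : Tendsto f (𝓝[Ico a s] s) (𝓝 M) := by
            have := hl s ⟨has, hsb⟩
            rwa [e] at this
          have hev1 : ∀ᶠ y in 𝓝[Ico a s] s, M - 1 / (n + 1) < f y :=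
            hts.eventually_const_lt (sub_lt_self M hpos)
          have hev2 : ∀ᶠ y in 𝓝[Ico a s] s, c < y :=
            eventually_nhdsWithin_of_eventually_nhds
              (eventually_gt_nhds hcs)
          obtain ⟨y, hy1, hy2, hy3⟩ :=
            (hev1.and (hev2.and self_mem_nhdsWithin)).exists
          exact ⟨y, hy2, le_trans (le_of_lt hy3.2) (le_of_lt hs),
            le_trans (le_of_lt hy3.2) hsb, hy1⟩
      choose y hy1 hy2 hy3 hy4 using hy
      have hyt : Tendsto y atTop (𝓝 c) := by
        have hupp : Tendsto (fun n : ℕ => c + 1 / (n + 1)) atTop (𝓝 c) := by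
          have := tendsto_const_nhds (α := ℕ) (x := c) |>.add
            tendsto_one_div_add_atTop_nhds_zero_nat
          rwa [add_zero] at this
        exact tendsto_of_tendsto_of_tendsto_of_le_of_le tendsto_const_nhds hupp
          (fun n => le_of_lt (hy1 n)) hy2
      have hymem : ∀ n, y n ∈ Icc a b :=
        fun n => ⟨le_trans hca (le_of_lt (hy1 n)), hy3 n⟩
      have hfyM : Tendsto (fun n => f (y n)) atTop (𝓝 M) := hsq y hy4 hymem
      have hevb : ∀ᶠ n in atTop, y n < b := hyt.eventually_lt_const hcb'
      have hyt' : Tendsto y atTop (𝓝[Ico c b] c) := by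
        rw [tendsto_nhdsWithin_iff]
        refine ⟨hyt, ?_⟩
        filter_upwards [hevb] with n hn
        exact ⟨le_of_lt (hy1 n), hn⟩
      have := (hr c ⟨hca, hcb'⟩).comp hyt'
      have hfc : f c = M := tendsto_nhds_unique this hfyM
      exact ⟨⟨hca, hcb⟩, le_antisymm (hmaxle c ⟨hca, hcb⟩) (hfc ▸ le_max_left _ _)⟩
  refine ⟨c, ⟨hcS, fun ξ hξ => csInf_le hSbd hξ⟩, ?_⟩
  rintro w ⟨hwS, hwmin⟩
  exact le_antisymm (hwmin c hcS) (csInf_le hSbd hwS)
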